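/- arXiv:1802.08881 — 3 statements merged into one kernel-verified Lean document; each statement's English description precedes it below -/
import Mathlib

section
/- For positive reals v₁*, ..., v_N* and every integer m ≥ 1, the polynomial p_m(x) = Σ_{k=1}^N ( (Σ_{n=1}^N v_n*²)/(v_k*)^{m−1} · x_k^{m+1} − Σ_{j=1}^N (v_k* v_j*)/(v_k*)^{m−1} · x_k^m x_j ) is nonnegative on the nonnegative orthant ℝ^N_{≥0}. -/
theorem pm_nonneg_on_orthant (N : ℕ) (v : Fin N → ℝ) (hv : ∀ k, 0 < v k)
    (m : ℕ) (hm : 1 ≤ m) (x : Fin N → ℝ) (hx : ∀ k, 0 ≤ x k) :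
    0 ≤ ∑ k : Fin N, ((∑ n : Fin N, (v n) ^ 2) / (v k) ^ (m - 1) * (x k) ^ (m + 1)
        - ∑ j : Fin N, (v k * v j) / (v k) ^ (m - 1) * (x k) ^ m * x j) := by
  obtain ⟨p, rfl⟩ : ∃ p, m = p + 1 := ⟨m - 1, (Nat.succ_pred_eq_of_pos hm).symm⟩
  set t : Fin N → ℝ := fun k => x k / v k with ht
  set w : Fin N → ℝ := fun k => (v k) ^ 2 with hw
  have hkey : ∀ k : Fin N, ((∑ n : Fin N, (v n) ^ 2) / (v k) ^ (p + 1 - 1) * (x k) ^ (p + 1 + 1)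
        - ∑ j : Fin N, (v k * v j) / (v k) ^ (p + 1 - 1) * (x k) ^ (p + 1) * x j)
      = ∑ j : Fin N, w k * w j * (t k ^ (p + 1) * (t k - t j)) := by
    intro k
    rw [Finset.sum_div, Finset.sum_mul, ← Finset.sum_sub_distrib]
    refine Finset.sum_congr rfl fun j _ => ?_
    have hvk := (hv k).ne'
    have hvj := (hv j).ne'
    have hxk : x k = v k * t k := by simp only [ht]; field_simp
    have hxj : x j = v j * t j := by simp only [ht]; field_simp
    rw [hxk, hxj]
    simp only [hw, Nat.add_sub_cancel]
    field_simp
    ring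
  rw [Finset.sum_congr rfl fun k _ => hkey k]
  have ht0 : ∀ i, 0 ≤ t i := fun i => div_nonneg (hx i) (hv i).le
  have hw0 : ∀ i, 0 ≤ w i := fun i => sq_nonneg _
  have h2 : 0 ≤ ∑ k : Fin N, ∑ j : Fin N,
      (w k * w j * (t k ^ (p + 1) * (t k - t j))
        + w j * w k * (t j ^ (p + 1) * (t j - t k))) := by
    refine Finset.sum_nonneg fun k _ => Finset.sum_nonneg fun j _ => ?_
    have heq : w k * w j * (t k ^ (p + 1) * (t k - t j))
        + w j * w k * (t j ^ (p + 1) * (t j - t k))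
        = w k * w j * ((t k ^ (p + 1) - t j ^ (p + 1)) * (t k - t j)) := by ring
    rw [heq]
    apply mul_nonneg (mul_nonneg (hw0 k) (hw0 j))
    rcases le_total (t j) (t k) with h | h
    · exact mul_nonneg (sub_nonneg.2 (pow_le_pow_left₀ (ht0 j) h _)) (sub_nonneg.2 h)
    · exact mul_nonneg_iff.2 (Or.inr ⟨sub_nonpos.2 (pow_le_pow_left₀ (ht0 k) h _),
        sub_nonpos.2 h⟩)
  have hcomm : (∑ k : Fin N, ∑ j : Fin N, w j * w k * (t j ^ (p + 1) * (t j - t k)))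
      = ∑ k : Fin N, ∑ j : Fin N, w k * w j * (t k ^ (p + 1) * (t k - t j)) :=
    Finset.sum_comm
  simp only [Finset.sum_add_distrib, hcomm] at h2
  linarith
end

section
/- Let m ≥ 2 be an integer, v₁*,...,v_N* > 0, x ∈ ℝ^N_{≥0}, and set x̄ = (Σ_j v_j* x_j)/(Σ_n v_n*²). Then p_m(x) = x̄ · p_{m−1}(x) + Σ_{k=1}^N (Σ_{n=1}^N v_n*²)/(v_k*)^{m−1} · x_k^{m−1} (x_k − v_k* x̄)², where p_m(x) = Σ_k ( (Σ_n v_n*²)/(v_k*)^{m−1} x_k^{m+1} − Σ_j (v_k* v_j*)/(v_k*)^{m−1} x_k^m x_j ). -/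
theorem pm_recursion (N : ℕ) (v : Fin N → ℝ) (hv : ∀ k, 0 < v k)
    (m : ℕ) (hm : 2 ≤ m) (x : Fin N → ℝ) (hx : ∀ k, 0 ≤ x k) :
    (∑ k : Fin N, ((∑ n : Fin N, (v n) ^ 2) / (v k) ^ (m - 1) * (x k) ^ (m + 1)
        - ∑ j : Fin N, (v k * v j) / (v k) ^ (m - 1) * (x k) ^ m * x j))
    = ((∑ j : Fin N, v j * x j) / (∑ n : Fin N, (v n) ^ 2)) *
        (∑ k : Fin N, ((∑ n : Fin N, (v n) ^ 2) / (v k) ^ (m - 2) * (x k) ^ m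
          - ∑ j : Fin N, (v k * v j) / (v k) ^ (m - 2) * (x k) ^ (m - 1) * x j))
      + ∑ k : Fin N, (∑ n : Fin N, (v n) ^ 2) / (v k) ^ (m - 1) * (x k) ^ (m - 1) *
          (x k - v k * ((∑ j : Fin N, v j * x j) / (∑ n : Fin N, (v n) ^ 2))) ^ 2 := by
  obtain ⟨m, rfl⟩ : ∃ m', m = m' + 2 := ⟨m - 2, by omega⟩
  rcases Nat.eq_zero_or_pos N with hN | hN
  · subst hN; simp
  have hS : (0:ℝ) < ∑ n : Fin N, (v n) ^ 2 :=
    Finset.sum_pos (fun i _ => pow_pos (hv i) 2) ⟨⟨0, hN⟩, Finset.mem_univ _⟩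
  set S := ∑ n : Fin N, (v n) ^ 2 with hSdef
  set T := ∑ j : Fin N, v j * x j with hT
  have h1 : m + 2 - 1 = m + 1 := rfl
  have h2 : m + 2 - 2 = m := rfl
  have hsum : ∀ (k : Fin N) (p q : ℕ),
      ∑ j : Fin N, (v k * v j) / (v k) ^ p * (x k) ^ q * x j
        = v k / (v k) ^ p * (x k) ^ q * T := by
    intro k p q
    rw [hT, Finset.mul_sum]
    exact Finset.sum_congr rfl fun j _ => by ring
  simp only [h1, h2, hsum]
  rw [Finset.mul_sum, ← Finset.sum_add_distrib]
  refine Finset.sum_congr rfl fun k _ => ?_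
  have hvk : v k ≠ 0 := (hv k).ne'
  have hS' : S ≠ 0 := hS.ne'
  field_simp
  ring
end

section
/- Let N ≥ 1, let θ*_1,...,θ*_N ∈ ℝ with θ*_1 = 0 and |θ*_j − θ*_k| ≤ θ̄ for all j,k, where θ̄ ∈ [0, π/2]. Then Σ_{k=1}^N Σ_{j=1}^N cos(θ*_j − θ*_k) ≥ N² (1 + cos θ̄)/2. -/
theorem sum_cos_lower_bound (N : ℕ) (hN : 1 ≤ N) (θ : Fin N → ℝ)
    (θbar : ℝ) (hθbar : θbar ∈ Set.Icc 0 (Real.pi / 2))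
    (h0 : θ ⟨0, hN⟩ = 0)
    (hdiff : ∀ j k, |θ j - θ k| ≤ θbar) :
    (N : ℝ) ^ 2 * (1 + Real.cos θbar) / 2 ≤
      ∑ k : Fin N, ∑ j : Fin N, Real.cos (θ j - θ k) := by
  obtain ⟨hb0, hbpi⟩ := hθbar
  have hpi := Real.pi_pos
  obtain ⟨jmax, -, hmax⟩ := Finset.exists_max_image Finset.univ θ ⟨⟨0, hN⟩, Finset.mem_univ _⟩
  obtain ⟨jmin, -, hmin⟩ := Finset.exists_min_image Finset.univ θ ⟨⟨0, hN⟩, Finset.mem_univ _⟩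
  set m : ℝ := (θ jmax + θ jmin) / 2 with hm
  have hab : θ jmax - θ jmin ≤ θbar := le_trans (le_abs_self _) (hdiff _ _)
  have habs : ∀ j, |θ j - m| ≤ θbar / 2 := by
    intro j
    rw [abs_le]
    constructor
    · have := hmin j (Finset.mem_univ _); have := hmax jmin (Finset.mem_univ _); linarith
    · have := hmax j (Finset.mem_univ _); have := hmin jmax (Finset.mem_univ _); linarith
  have hcos : ∀ j, Real.cos (θbar / 2) ≤ Real.cos (θ j - m) := by
    intro j
    rw [← Real.cos_abs (θ j - m)]
    exact Real.cos_le_cos_of_nonneg_of_le_pi (abs_nonneg _) (by linarith) (habs j)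
  have hcnn : 0 ≤ Real.cos (θbar / 2) :=
    Real.cos_nonneg_of_mem_Icc ⟨by linarith, by linarith⟩
  have key : ∑ k : Fin N, ∑ j : Fin N, Real.cos (θ j - θ k)
      = (∑ j : Fin N, Real.cos (θ j - m)) ^ 2 + (∑ j : Fin N, Real.sin (θ j - m)) ^ 2 := by
    have step : ∀ k : Fin N, ∑ j : Fin N, Real.cos (θ j - θ k)
        = (∑ j : Fin N, Real.cos (θ j - m)) * Real.cos (θ k - m)
          + (∑ j : Fin N, Real.sin (θ j - m)) * Real.sin (θ k - m) := by
      intro k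
      rw [Finset.sum_mul, Finset.sum_mul, ← Finset.sum_add_distrib]
      refine Finset.sum_congr rfl fun j _ => ?_
      rw [show θ j - θ k = (θ j - m) - (θ k - m) by ring, Real.cos_sub]
    simp_rw [step, Finset.sum_add_distrib, ← Finset.mul_sum]
    ring
  have hsum : (N : ℝ) * Real.cos (θbar / 2) ≤ ∑ j : Fin N, Real.cos (θ j - m) := by
    calc (N : ℝ) * Real.cos (θbar / 2) = ∑ _j : Fin N, Real.cos (θbar / 2) := by
          simp [Finset.sum_const, nsmul_eq_mul]
      _ ≤ ∑ j : Fin N, Real.cos (θ j - m) := Finset.sum_le_sum fun j _ => hcos j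
  have hsq : ((N : ℝ) * Real.cos (θbar / 2)) ^ 2 ≤ (∑ j : Fin N, Real.cos (θ j - m)) ^ 2 := by
    apply pow_le_pow_left₀ (by positivity) hsum
  have hhalf : Real.cos (θbar / 2) ^ 2 = 1 / 2 + Real.cos θbar / 2 := by
    have h := Real.cos_sq (θbar / 2)
    rwa [show 2 * (θbar / 2) = θbar by ring] at h
  rw [key]
  nlinarith [sq_nonneg (∑ j : Fin N, Real.sin (θ j - m))]
end
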